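/- Let j ≥ 2 and let b, a_0, ..., a_{j−1} be nonzero complex numbers with a_n = b · ∏_{k=1}^{j} a_{n−k} for n ≥ j. If |b| · ∏_{k=0}^{j−1} |a_k|^{1 − φ_j^{−k−1}} > 1, where φ_j is the j-nacci constant, then |a_n| → ∞. -/

import Mathlib

set_option maxHeartbeats 2000000 in

theorem stmt_17 (j : ℕ) (hj : 2 ≤ j) (b : ℂ) (hb : b ≠ 0)
    (a : ℕ → ℂ) (ha : ∀ k < j, a k ≠ 0)
    (hrec : ∀ n ≥ j, a n = b * ∏ k ∈ Finset.Icc 1 j, a (n - k))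
    (φ : ℝ) (hφpos : 0 < φ)
    (hφ : ∑ k ∈ Finset.Icc 1 j, φ ^ (-(k : ℤ)) = 1)
    (hcond : 1 < ‖b‖ *
      ∏ k ∈ Finset.range j, ‖a k‖ ^ ((1 : ℝ) - φ⁻¹ ^ (k + 1))) :
    Filter.Tendsto (fun n => ‖a n‖) Filter.atTop Filter.atTop := by
  obtain ⟨m, rfl⟩ : ∃ m, j = m + 1 := ⟨j - 1, by omega⟩
  have hm : 1 ≤ m := by omega
  have hmR : (1:ℝ) ≤ (m:ℝ) := by exact_mod_cast hm
  -- all terms nonzero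
  have hane : ∀ n, a n ≠ 0 := by
    intro n
    induction n using Nat.strong_induction_on with
    | _ n ih =>
      rcases lt_or_ge n (m+1) with h | h
      · exact ha n h
      · rw [hrec n h]
        refine mul_ne_zero hb (Finset.prod_ne_zero_iff.mpr ?_)
        intro k hk
        simp only [Finset.mem_Icc] at hk
        exact ih (n - k) (by omega)
  have habs : ∀ n, 0 < ‖a n‖ := fun n => norm_pos_iff.mpr (hane n)
  set β := Real.log (‖b‖) with hβdef
  set L : ℕ → ℝ := fun n => Real.log (‖a n‖) with hLdef
  set ψ := φ⁻¹ with hψdef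
  have hφψ : ∀ k : ℕ, φ ^ (-(k:ℤ)) = ψ ^ k := by
    intro k
    rw [zpow_neg, zpow_natCast, hψdef, inv_pow]
  -- φ > 1
  have hφ1 : 1 < φ := by
    by_contra hle
    push_neg at hle
    have hψ1 : 1 ≤ ψ := by
      rw [hψdef]
      exact (one_le_inv_iff₀).2 ⟨hφpos, hle⟩
    have h2 : ((m:ℝ)+1) ≤ ∑ k ∈ Finset.Icc 1 (m+1), φ ^ (-(k:ℤ)) := by
      have hcard : (Finset.Icc 1 (m+1)).card = m + 1 := by
        rw [Nat.card_Icc]; omega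
      calc ((m:ℝ)+1) = (Finset.Icc 1 (m+1)).card • (1:ℝ) := by
              rw [hcard]; push_cast; ring
        _ ≤ ∑ k ∈ Finset.Icc 1 (m+1), φ ^ (-(k:ℤ)) := by
              refine Finset.card_nsmul_le_sum _ _ _ fun k _ => ?_
              rw [hφψ]
              exact one_le_pow₀ hψ1
    rw [hφ] at h2
    linarith
  have hψpos : 0 < ψ := inv_pos.mpr hφpos
  have hψlt1 : ψ < 1 := by rw [hψdef]; exact inv_lt_one_of_one_lt₀ hφ1
  have hφψ1 : φ * ψ = 1 := mul_inv_cancel₀ (ne_of_gt hφpos)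
  have hφ1pos : (0:ℝ) < φ - 1 := by linarith
  -- the j-nacci equation in ψ form over range
  have hsum1 : ∑ k ∈ Finset.range (m+1), ψ^(k+1) = 1 := by
    have h := hφ
    rw [← Finset.Ico_add_one_right_eq_Icc, Finset.sum_Ico_eq_sum_range] at h
    simp only [show m + 1 + 1 - 1 = m + 1 from rfl] at h
    rw [← h]
    refine Finset.sum_congr rfl fun i _ => ?_
    rw [hφψ, add_comm 1 i]
  -- geometric consequence
  have hgeo : 1 - ψ^(m+1) = φ - 1 := by
    have hS : (∑ i ∈ Finset.range (m+1), ψ^i) * (ψ - 1) = ψ^(m+1) - 1 := geom_sum_mul ψ (m+1)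
    have h1 : ψ * ∑ i ∈ Finset.range (m+1), ψ^i = 1 := by
      rw [Finset.mul_sum, ← hsum1]
      exact Finset.sum_congr rfl fun i _ => (pow_succ' ψ i).symm
    have h2 : ψ * ((∑ i ∈ Finset.range (m+1), ψ^i) * (ψ - 1)) = ψ - 1 := by
      rw [← mul_assoc, h1, one_mul]
    rw [hS] at h2
    -- h2 : ψ * (ψ^(m+1) - 1) = ψ - 1
    have h3 := congrArg (fun t => φ * t) h2
    nlinarith [h3, hφψ1]
  have hphi : φ^(m+1) - 1 = φ^(m+1) * (φ - 1) := by
    have h := congrArg (fun t => φ^(m+1) * t) hgeo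
    have hpp : φ^(m+1) * ψ^(m+1) = 1 := by
      rw [← mul_pow, hφψ1, one_pow]
    nlinarith [h, hpp]
  have hphisum : ∑ k ∈ Finset.range (m+1), φ^k = φ^(m+1) := by
    have hS : (∑ i ∈ Finset.range (m+1), φ^i) * (φ - 1) = φ^(m+1) - 1 := geom_sum_mul φ (m+1)
    rw [hphi] at hS
    exact mul_right_cancel₀ (ne_of_gt hφ1pos) hS
  -- weights
  set c : ℕ → ℝ := fun k => (1 - ψ^(k+1)) / (φ - 1) with hcdef
  have hcnn : ∀ k, 0 ≤ c k := by
    intro k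
    apply div_nonneg _ (le_of_lt hφ1pos)
    have := pow_le_one₀ (le_of_lt hψpos) (le_of_lt hψlt1) (n := k+1)
    linarith
  have hclast : c m = 1 := by
    rw [hcdef]
    simp only
    rw [hgeo]
    exact div_self (ne_of_gt hφ1pos)
  have hc0 : φ * c 0 = 1 := by
    rw [hcdef]
    simp only [pow_one]
    field_simp
    simp only [zero_add, pow_one]
    linarith [hφψ1]
  have hcstep : ∀ k, φ * c (k+1) = c k + 1 := by
    intro k
    rw [hcdef]
    simp only
    field_simp
    have : φ * ψ^(k+1+1) = ψ^(k+1) := by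
      rw [pow_succ' ψ (k+1), ← mul_assoc, hφψ1, one_mul]
    linarith [this]
  -- log recurrence
  have hLrec : ∀ n, L (n + (m+1)) = β + ∑ k ∈ Finset.range (m+1), L (n + k) := by
    intro n
    have h := hrec (n + (m+1)) (by omega)
    have habsj : ‖a (n+(m+1))‖ =
        ‖b‖ * ∏ k ∈ Finset.Icc 1 (m+1), ‖a (n + (m+1) - k)‖ := by
      rw [h, norm_mul, norm_prod]
    have hlog : L (n+(m+1)) = β + ∑ k ∈ Finset.Icc 1 (m+1), L (n + (m+1) - k) := by
      rw [hLdef]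
      simp only
      rw [habsj, Real.log_mul (ne_of_gt (norm_pos_iff.mpr hb))
        (ne_of_gt (Finset.prod_pos fun k _ => habs _)),
        Real.log_prod (fun k _ => ne_of_gt (habs _))]
    rw [hlog]
    congr 1
    rw [← Finset.Ico_add_one_right_eq_Icc, Finset.sum_Ico_eq_sum_range]
    simp only [show m + 1 + 1 - 1 = m + 1 from rfl]
    rw [← Finset.sum_range_reflect (fun i => L (n + i)) (m+1)]
    refine Finset.sum_congr rfl fun i hi => ?_
    simp only [Finset.mem_range] at hi
    congr 1
    omega
  -- constants
  set κ : ℝ := -β / m with hκdef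
  have hβκ : β + (m:ℝ) * κ = 0 := by
    rw [hκdef]
    field_simp
    ring
  set W0 : ℝ := ∑ k ∈ Finset.range (m+1), c k * L k with hW0def
  set T : ℝ := ∑ k ∈ Finset.range (m+1), c k * φ^k with hTdef
  set Sc : ℝ := ∑ k ∈ Finset.range (m+1), c k with hScdef
  have hTpos : 0 < T := by
    rw [hTdef]
    refine Finset.sum_pos' (fun k _ => mul_nonneg (hcnn k) (by positivity)) ⟨m, ?_, ?_⟩
    · simp
    · rw [hclast, one_mul]; positivity
  have hSc : Sc = (m:ℝ) / (φ - 1) := by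
    rw [hScdef, hcdef]
    rw [← Finset.sum_div]
    congr 1
    rw [Finset.sum_sub_distrib, hsum1, Finset.sum_const, Finset.card_range]
    push_cast; ring
  -- log of the hypothesis condition
  have hlogcond : 0 < β + ∑ k ∈ Finset.range (m+1), (1 - ψ^(k+1)) * L k := by
    have hpos : (0:ℝ) < ∏ k ∈ Finset.range (m+1), ‖a k‖ ^ ((1:ℝ) - ψ ^ (k + 1)) :=
      Finset.prod_pos fun k _ => Real.rpow_pos_of_pos (habs k) _
    have h0 := Real.log_pos hcond
    rw [Real.log_mul (ne_of_gt (norm_pos_iff.mpr hb)) (ne_of_gt hpos),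
      Real.log_prod (fun k _ => ne_of_gt (Real.rpow_pos_of_pos (habs k) _))] at h0
    have heq : ∀ k ∈ Finset.range (m+1),
        Real.log (‖a k‖ ^ ((1:ℝ) - ψ ^ (k + 1))) = (1 - ψ^(k+1)) * L k := by
      intro k _
      rw [Real.log_rpow (habs k)]
    rw [Finset.sum_congr rfl heq] at h0
    exact h0
  have hW0 : W0 = (∑ k ∈ Finset.range (m+1), (1 - ψ^(k+1)) * L k) / (φ - 1) := by
    rw [hW0def, Finset.sum_div]
    refine Finset.sum_congr rfl fun k _ => ?_
    rw [hcdef]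
    ring
  have hnum : 0 < W0 - κ * Sc := by
    have h1 : κ * Sc = -β / (φ - 1) := by
      rw [hκdef, hSc]
      field_simp
    rw [h1, hW0]
    have h2 : (∑ k ∈ Finset.range (m+1), (1 - ψ^(k+1)) * L k) / (φ - 1) - -β / (φ-1)
        = (β + ∑ k ∈ Finset.range (m+1), (1 - ψ^(k+1)) * L k) / (φ - 1) := by
      ring
    rw [h2]
    exact div_pos hlogcond hφ1pos
  -- exact solution and error
  set A : ℝ := (W0 - κ * Sc) / T with hAdef
  have hApos : 0 < A := div_pos hnum hTpos
  set x : ℕ → ℝ := fun n => A * φ^n + κ with hxdef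
  set E : ℕ → ℝ := fun n => L n - x n with hEdef
  have hxrec : ∀ n, x (n + (m+1)) = β + ∑ k ∈ Finset.range (m+1), x (n + k) := by
    intro n
    have hsplit : ∑ k ∈ Finset.range (m+1), x (n + k)
        = A * φ^n * (∑ k ∈ Finset.range (m+1), φ^k) + ((m:ℝ)+1) * κ := by
      rw [hxdef]
      simp only
      rw [Finset.sum_add_distrib, Finset.sum_const, Finset.card_range, Finset.mul_sum,
        nsmul_eq_mul]
      push_cast
      congr 1
      refine Finset.sum_congr rfl fun k _ => ?_
      rw [pow_add]
      ring
    rw [hsplit, hphisum, hxdef]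
    simp only
    rw [pow_add]
    linarith [hβκ]
  have hErec : ∀ n, E (n + (m+1)) = ∑ k ∈ Finset.range (m+1), E (n + k) := by
    intro n
    rw [hEdef]
    simp only
    rw [hLrec, hxrec, Finset.sum_sub_distrib]
    ring
  -- weighted sum of E vanishes
  have hWzero : ∀ n, ∑ k ∈ Finset.range (m+1), c k * E (n + k) = 0 := by
    intro n
    induction n with
    | zero =>
      have hx0 : ∑ k ∈ Finset.range (m+1), c k * x k = A * T + κ * Sc := by
        rw [hxdef, hTdef, hScdef]
        simp only
        rw [Finset.mul_sum, Finset.mul_sum, ← Finset.sum_add_distrib]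
        refine Finset.sum_congr rfl fun k _ => by ring
      have hAT : A * T = W0 - κ * Sc := by
        rw [hAdef]
        exact div_mul_cancel₀ _ (ne_of_gt hTpos)
      have : ∑ k ∈ Finset.range (m+1), c k * E (0 + k)
          = W0 - ∑ k ∈ Finset.range (m+1), c k * x k := by
        rw [hEdef, hW0def]
        simp only [Nat.zero_add]
        rw [← Finset.sum_sub_distrib]
        refine Finset.sum_congr rfl fun k _ => by ring
      rw [this, hx0, hAT]
      ring
    | succ n ih =>
      have key : ∑ k ∈ Finset.range (m+1), c k * E (n + 1 + k)
          = φ * ∑ k ∈ Finset.range (m+1), c k * E (n + k) := by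
        rw [Finset.sum_range_succ, hclast, one_mul,
          show n + 1 + m = n + (m+1) by omega, hErec n, Finset.mul_sum,
          Finset.sum_range_succ' (fun k => φ * (c k * E (n + k))) m,
          Finset.sum_range_succ' (fun k => E (n + k)) m]
        have h1 : ∀ k ∈ Finset.range m, φ * (c (k+1) * E (n + (k+1)))
            = c k * E (n + 1 + k) + E (n + 1 + k) := by
          intro k _
          rw [show n + (k+1) = n + 1 + k by omega, ← mul_assoc, hcstep k]
          ring
        rw [Finset.sum_congr rfl h1, Finset.sum_add_distrib]
        have h2 : φ * (c 0 * E (n + 0)) = E (n + 0) := by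
          rw [← mul_assoc, hc0, one_mul]
        rw [h2]
        have h3 : ∀ k ∈ Finset.range m, E (n + (k+1)) = E (n + 1 + k) := by
          intro k _
          congr 1
          omega
        rw [Finset.sum_congr rfl h3]
        ring
      rw [key, ih, mul_zero]
  -- degree-m recurrence for E
  have hE2 : ∀ n, E (n + m) = -∑ k ∈ Finset.range m, c k * E (n + k) := by
    intro n
    have h := hWzero n
    rw [Finset.sum_range_succ, hclast, one_mul] at h
    linarith
  -- choose ρ < φ with ∑ c k ρ^k ≤ ρ^m
  have hgφ : 0 < φ^m - ∑ k ∈ Finset.range m, c k * φ^k := by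
    have h1 : ∀ k : ℕ, c k * φ^k * (φ - 1) = φ^k - ψ := by
      intro k
      have hmix : ψ^(k+1) * φ^k = ψ := by
        rw [pow_succ' ψ k, mul_assoc, ← mul_pow, mul_comm ψ φ, hφψ1, one_pow, mul_one]
      rw [hcdef]
      simp only
      rw [div_mul_eq_mul_div, div_mul_cancel₀ _ (ne_of_gt hφ1pos), sub_mul, one_mul, hmix]
    have hsum' : (∑ k ∈ Finset.range m, c k * φ^k) * (φ-1)
        = ∑ k ∈ Finset.range m, φ^k - (m:ℝ) * ψ := by
      rw [Finset.sum_mul, Finset.sum_congr rfl (fun k _ => h1 k), Finset.sum_sub_distrib,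
        Finset.sum_const, Finset.card_range, nsmul_eq_mul]
    have hrangem : ∑ k ∈ Finset.range m, φ^k = φ^(m+1) - φ^m := by
      have h := hphisum
      rw [Finset.sum_range_succ] at h
      linarith
    have hmψ : 0 < (m:ℝ) * ψ := mul_pos (by linarith) hψpos
    have hps : φ^(m+1) = φ^m * φ := pow_succ φ m
    have hlt : (∑ k ∈ Finset.range m, c k * φ^k) * (φ-1) < φ^m * (φ-1) := by
      rw [hsum', hrangem]
      nlinarith
    have hlt2 : ∑ k ∈ Finset.range m, c k * φ^k < φ^m :=
      lt_of_mul_lt_mul_right hlt (le_of_lt hφ1pos)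
    linarith
  have hgcont : Continuous (fun r : ℝ => r^m - ∑ k ∈ Finset.range m, c k * r^k) :=
    (continuous_pow m).sub
      (continuous_finset_sum _ fun k _ => (continuous_const.mul (continuous_pow k)))
  have hev1 : ∀ᶠ r in nhds φ, 0 < r^m - ∑ k ∈ Finset.range m, c k * r^k :=
    (hgcont.tendsto φ).eventually (eventually_gt_nhds hgφ)
  have hev2 : ∀ᶠ r in nhds φ, 0 < r := eventually_gt_nhds hφpos
  have hev3 : ∀ᶠ r in nhdsWithin φ (Set.Iio φ),
      ((0 < r^m - ∑ k ∈ Finset.range m, c k * r^k) ∧ 0 < r) ∧ r < φ :=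
    (((hev1.and hev2).filter_mono nhdsWithin_le_nhds).and
      (eventually_mem_nhdsWithin.mono fun x hx => hx))
  obtain ⟨ρ, ⟨hgρ, hρpos⟩, hρφ⟩ := hev3.exists
  replace hρφ : ρ < φ := hρφ
  have hgρ' : ∑ k ∈ Finset.range m, c k * ρ^k ≤ ρ^m := by
    linarith
  -- uniform bound |E n| ≤ K ρ^n
  clear_value E x A Sc T W0 κ c ψ L β
  obtain ⟨K, hKpos, hKbase⟩ : ∃ K : ℝ, 0 < K ∧ ∀ i, i < m → |E i| ≤ K * ρ^i := by
    refine ⟨1 + ∑ i ∈ Finset.range m, |E i| * (ρ⁻¹)^i, ?_, ?_⟩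
    · have h0 : 0 ≤ ∑ i ∈ Finset.range m, |E i| * (ρ⁻¹)^i :=
        Finset.sum_nonneg fun i _ => mul_nonneg (abs_nonneg (E i))
          (pow_nonneg (inv_nonneg.mpr (le_of_lt hρpos)) i)
      linarith
    · intro i hi
      have h1 : |E i| * (ρ⁻¹)^i ≤ 1 + ∑ i ∈ Finset.range m, |E i| * (ρ⁻¹)^i := by
        have h2 : |E i| * (ρ⁻¹)^i ≤ ∑ i ∈ Finset.range m, |E i| * (ρ⁻¹)^i :=
          Finset.single_le_sum (fun i _ => mul_nonneg (abs_nonneg (E i))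
            (pow_nonneg (inv_nonneg.mpr (le_of_lt hρpos)) i))
            (Finset.mem_range.mpr hi)
        linarith
      have h3 := mul_le_mul_of_nonneg_right h1 (le_of_lt (pow_pos hρpos i))
      rw [mul_assoc, ← mul_pow, inv_mul_cancel₀ (ne_of_gt hρpos), one_pow, mul_one] at h3
      exact h3
  have hEbound : ∀ n, |E n| ≤ K * ρ^n := by
    intro n
    induction n using Nat.strong_induction_on with
    | _ n ih =>
      rcases lt_or_ge n m with h | h
      · exact hKbase n h
      · obtain ⟨t, rfl⟩ : ∃ t, n = t + m := ⟨n - m, by omega⟩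
        rw [hE2 t, abs_neg]
        calc |∑ k ∈ Finset.range m, c k * E (t+k)|
            ≤ ∑ k ∈ Finset.range m, |c k * E (t+k)| := Finset.abs_sum_le_sum_abs _ _
          _ ≤ ∑ k ∈ Finset.range m, c k * (K * ρ^(t+k)) := by
              refine Finset.sum_le_sum fun k hk => ?_
              rw [abs_mul, abs_of_nonneg (hcnn k)]
              refine mul_le_mul_of_nonneg_left
                (ih (t+k) ?_) (hcnn k)
              simp only [Finset.mem_range] at hk
              omega
          _ = (K * ρ^t) * ∑ k ∈ Finset.range m, c k * ρ^k := by
              rw [Finset.mul_sum]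
              refine Finset.sum_congr rfl fun k _ => ?_
              rw [pow_add]
              ring
          _ ≤ (K * ρ^t) * ρ^m := by
              refine mul_le_mul_of_nonneg_left hgρ' ?_
              positivity
          _ = K * ρ^(t+m) := by rw [pow_add]; ring
  -- lower bound for L and conclusion
  have hLlower : ∀ n, A * φ^n + κ - K * ρ^n ≤ L n := by
    intro n
    have h := (abs_le.mp (hEbound n)).1
    rw [hEdef] at h
    simp only at h
    rw [hxdef] at h
    simp only at h
    linarith
  have htends : Filter.Tendsto (fun n : ℕ => A * φ^n + κ - K * ρ^n) Filter.atTop Filter.atTop := by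
    have heq : (fun n : ℕ => A * φ^n + κ - K * ρ^n)
        = fun n : ℕ => φ^n * (A - K * (ρ/φ)^n) + κ := by
      funext n
      rw [div_pow]
      field_simp
      ring
    rw [heq]
    apply Filter.tendsto_atTop_add_const_right
    have hq : Filter.Tendsto (fun n : ℕ => (ρ/φ)^n) Filter.atTop (nhds 0) := by
      apply tendsto_pow_atTop_nhds_zero_of_lt_one
      · positivity
      · rw [div_lt_one hφpos]; exact hρφ
    have hg2 : Filter.Tendsto (fun n : ℕ => A - K * (ρ/φ)^n) Filter.atTop (nhds A) := by
      have := Filter.Tendsto.const_sub A ((hq.const_mul K))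
      simpa using this
    exact Filter.Tendsto.atTop_mul_pos hApos
      (tendsto_pow_atTop_atTop_of_one_lt hφ1) hg2
  have hLtends : Filter.Tendsto L Filter.atTop Filter.atTop :=
    Filter.tendsto_atTop_mono hLlower htends
  have hfinal : (fun n => ‖a n‖) = fun n => Real.exp (L n) := by
    funext n
    rw [hLdef]
    simp only
    rw [Real.exp_log (habs n)]
  rw [hfinal]
  exact Real.tendsto_exp_atTop.comp hLtends
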